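/- Let τ0 > 0 and for (d,v) ∈ ℝ² write Z = d + τ0·v. Let D ⊂ ℝ² be a bounded Lebesgue-measurable set of positive Lebesgue measure, and let u : ℝ² → ℝ be Lebesgue integrable on D with u(d,v) > 0 for all (d,v) ∈ D. Then for every σ > 0 and every λ0 ∈ ℝ such that ∂U/∂λ(λ0,σ) = 0, one has ∂²U/∂λ²(λ0,σ) > 0; that is, every critical point of λ ↦ U(λ,σ) is a strict local minimum. -/

import Mathlib

open MeasureTheory Real Filter

/-- The Gaussian Q-function `Q(x) = (1/√(2π)) ∫_x^∞ exp(−t²/2) dt`. -/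
noncomputable def Qfun (x : ℝ) : ℝ :=
  (Real.sqrt (2 * Real.pi))⁻¹ * ∫ t in Set.Ioi x, Real.exp (-t ^ 2 / 2)

lemma gauss_integrable : Integrable (fun t : ℝ => Real.exp (-t ^ 2 / 2)) := by
  have h := integrable_exp_neg_mul_sq (show (0:ℝ) < 1/2 by norm_num)
  refine h.congr (Filter.Eventually.of_forall fun t => ?_)
  ring_nf

lemma gauss_continuous : Continuous (fun t : ℝ => Real.exp (-t ^ 2 / 2)) := by
  fun_prop

lemma hasDerivAt_Qfun (x : ℝ) :
    HasDerivAt Qfun (-((Real.sqrt (2 * Real.pi))⁻¹ * Real.exp (-x ^ 2 / 2))) x := by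
  set g : ℝ → ℝ := fun t => Real.exp (-t ^ 2 / 2) with hg
  have hgi : Integrable g := gauss_integrable
  have hident : ∀ y : ℝ, (∫ t in Set.Ioi y, g t) =
      (∫ t, g t) - ((∫ t in Set.Iic (0:ℝ), g t) + ∫ t in (0:ℝ)..y, g t) := by
    intro y
    have h1 := intervalIntegral.integral_Iic_add_Ioi (hgi.integrableOn (s := Set.Iic y))
      (hgi.integrableOn (s := Set.Ioi y))
    have h2 := intervalIntegral.integral_Iic_sub_Iic (hgi.integrableOn (s := Set.Iic (0:ℝ)))
      (hgi.integrableOn (s := Set.Iic y))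
    linarith
  have hFTC : HasDerivAt (fun y => ∫ t in (0:ℝ)..y, g t) (g x) x :=
    intervalIntegral.integral_hasDerivAt_right (hgi.intervalIntegrable)
      (gauss_continuous.stronglyMeasurable.stronglyMeasurableAtFilter)
      gauss_continuous.continuousAt
  have : HasDerivAt (fun y => (Real.sqrt (2 * Real.pi))⁻¹ *
      ((∫ t, g t) - ((∫ t in Set.Iic (0:ℝ), g t) + ∫ t in (0:ℝ)..y, g t)))
      ((Real.sqrt (2 * Real.pi))⁻¹ * (-(g x))) x := by
    exact (((hFTC.const_add _).const_sub _)).const_mul _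
  refine (this.congr_deriv (by ring)).congr_of_eventuallyEq ?_
  filter_upwards with y
  simp only [Qfun]
  exact congrArg (fun z => (Real.sqrt (2 * Real.pi))⁻¹ * z) (hident y)

/-- The wrong-decision probability `P_w(d,v;λ,σ)`. -/
noncomputable def Pw (τ0 σ lam : ℝ) (p : ℝ × ℝ) : ℝ :=
  if 0 ≤ p.1 + τ0 * p.2 then Qfun ((p.1 + τ0 * p.2 - lam) / σ)
  else Qfun (-(p.1 + τ0 * p.2 - lam) / σ)

lemma hasDerivAt_Pw (τ0 : ℝ) {σ : ℝ} (hσ : 0 < σ) (p : ℝ × ℝ) (l : ℝ) :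
    HasDerivAt (fun l => Pw τ0 σ l p)
      ((if 0 ≤ p.1 + τ0 * p.2 then (1:ℝ) else -1) * ((Real.sqrt (2 * Real.pi))⁻¹ / σ) *
        Real.exp (-((p.1 + τ0 * p.2 - l) / σ) ^ 2 / 2)) l := by
  set Z := p.1 + τ0 * p.2 with hZ
  by_cases h : 0 ≤ Z
  · have hinner : HasDerivAt (fun l : ℝ => (Z - l) / σ) (-1 / σ) l := by
      simpa using ((hasDerivAt_id l).const_sub Z).div_const σ
    have hc := (hasDerivAt_Qfun ((Z - l) / σ)).comp l hinner
    have heq : (fun l => Pw τ0 σ l p) = fun l => Qfun ((Z - l) / σ) := by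
      funext y; simp only [Pw, ← hZ, if_pos h]
    rw [heq]
    refine hc.congr_deriv ?_
    rw [if_pos h]; field_simp
  · have hinner : HasDerivAt (fun l : ℝ => -(Z - l) / σ) (1 / σ) l := by
      have : HasDerivAt (fun l : ℝ => -(Z - l)) 1 l := by
        exact (((hasDerivAt_id l).const_sub Z).neg).congr_deriv (neg_neg 1)
      simpa using this.div_const σ
    have hc := (hasDerivAt_Qfun (-(Z - l) / σ)).comp l hinner
    have heq : (fun l => Pw τ0 σ l p) = fun l => Qfun (-(Z - l) / σ) := by
      funext y; simp only [Pw, ← hZ, if_neg h]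
    rw [heq]
    refine hc.congr_deriv ?_
    rw [if_neg h]
    have : (-(Z - l) / σ) ^ 2 = ((Z - l) / σ) ^ 2 := by ring
    rw [this]; field_simp

lemma hasDerivAt_gaussfactor (Z : ℝ) {σ : ℝ} (hσ : 0 < σ) (l : ℝ) :
    HasDerivAt (fun l => Real.exp (-((Z - l) / σ) ^ 2 / 2))
      (((Z - l) / σ ^ 2) * Real.exp (-((Z - l) / σ) ^ 2 / 2)) l := by
  have hinner : HasDerivAt (fun l : ℝ => (Z - l) / σ) (-1 / σ) l := by
    simpa using ((hasDerivAt_id l).const_sub Z).div_const σ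
  have hsq : HasDerivAt (fun l : ℝ => -((Z - l) / σ) ^ 2 / 2) ((Z - l) / σ ^ 2) l := by
    have h2 := (hinner.pow 2).neg.div_const 2
    refine h2.congr_deriv ?_
    norm_num; field_simp
  have := hsq.exp
  refine this.congr_deriv (by ring)

/-- The total wrong decision loss `U(λ,σ) = ∬_D u(d,v) P_w(d,v;λ,σ) dd dv`. -/
noncomputable def Uloss (τ0 : ℝ) (D : Set (ℝ × ℝ)) (u : ℝ × ℝ → ℝ) (lam σ : ℝ) : ℝ :=
  ∫ p in D, u p * Pw τ0 σ lam p

lemma Qfun_abs_le (x : ℝ) :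
    |Qfun x| ≤ (Real.sqrt (2 * Real.pi))⁻¹ * ∫ t, Real.exp (-t ^ 2 / 2) := by
  have h0 : 0 ≤ ∫ t in Set.Ioi x, Real.exp (-t ^ 2 / 2) :=
    setIntegral_nonneg measurableSet_Ioi fun t _ => (Real.exp_pos _).le
  have h1 : (∫ t in Set.Ioi x, Real.exp (-t ^ 2 / 2)) ≤ ∫ t, Real.exp (-t ^ 2 / 2) :=
    setIntegral_le_integral gauss_integrable
      (Filter.Eventually.of_forall fun t => (Real.exp_pos _).le)
  have hcn : (0:ℝ) ≤ (Real.sqrt (2 * Real.pi))⁻¹ := by positivity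
  rw [Qfun, abs_mul, abs_of_nonneg hcn, abs_of_nonneg h0]
  exact mul_le_mul_of_nonneg_left h1 hcn

theorem stmt2 (τ0 : ℝ) (hτ0 : 0 < τ0) (D : Set (ℝ × ℝ)) (hDmeas : MeasurableSet D)
    (hDbdd : Bornology.IsBounded D) (hDpos : 0 < volume D) (u : ℝ × ℝ → ℝ)
    (hu_int : IntegrableOn u D volume)
    (hu_pos : ∀ p ∈ D, 0 < u p)
    (σ : ℝ) (hσ : 0 < σ) (lam0 : ℝ)
    (hcrit : deriv (fun l => Uloss τ0 D u l σ) lam0 = 0) :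
    0 < deriv (deriv (fun l => Uloss τ0 D u l σ)) lam0 := by
  classical
  set c : ℝ := (Real.sqrt (2 * Real.pi))⁻¹ with hc
  have hc_pos : 0 < c := by
    rw [hc]; exact inv_pos.mpr (Real.sqrt_pos.mpr (by positivity))
  set μ : Measure (ℝ × ℝ) := volume.restrict D with hμ
  set Z : ℝ × ℝ → ℝ := fun p => p.1 + τ0 * p.2 with hZdef
  set s : ℝ × ℝ → ℝ := fun p => if 0 ≤ Z p then 1 else -1 with hsdef
  have hZcont : Continuous Z := by fun_prop
  have hZmeas : Measurable Z := hZcont.measurable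
  have hsmeas : Measurable s :=
    Measurable.ite (measurableSet_le measurable_const hZmeas) measurable_const measurable_const
  have hs_abs : ∀ p, |s p| = 1 := by
    intro p; by_cases h : 0 ≤ Z p <;> simp [hsdef, h]
  have hQcont : Continuous Qfun :=
    continuous_iff_continuousAt.mpr fun x => (hasDerivAt_Qfun x).continuousAt
  -- bound on D
  obtain ⟨R, hR⟩ : ∃ R, ∀ p ∈ D, ‖p‖ ≤ R := hDbdd.exists_norm_le
  set M : ℝ := (1 + τ0) * R with hM
  have hZbdd : ∀ p ∈ D, |Z p| ≤ M := by
    intro p hp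
    have h1 : |p.1| ≤ R := (norm_fst_le p).trans (hR p hp)
    have h2 : |p.2| ≤ R := (norm_snd_le p).trans (hR p hp)
    calc |Z p| ≤ |p.1| + τ0 * |p.2| := by
          rw [hZdef]
          refine (abs_add_le _ _).trans ?_
          simp [abs_mul, abs_of_pos hτ0]
      _ ≤ (1 + τ0) * R := by nlinarith
  have hM0 : 0 ≤ M := by
    obtain ⟨p, hp⟩ := nonempty_of_measure_ne_zero hDpos.ne'
    exact le_trans (abs_nonneg _) (hZbdd p hp)
  -- the gaussian factor
  set e : ℝ → ℝ × ℝ → ℝ := fun l p => Real.exp (-((Z p - l) / σ) ^ 2 / 2) with hedef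
  have he_pos : ∀ l p, 0 < e l p := fun l p => Real.exp_pos _
  have he_le_one : ∀ l p, e l p ≤ 1 := by
    intro l p
    rw [hedef]
    refine Real.exp_le_one_iff.mpr ?_
    have : 0 ≤ ((Z p - l) / σ) ^ 2 := sq_nonneg _
    linarith
  have he_cont : ∀ l, Continuous fun p => e l p := by
    intro l; rw [hedef]; fun_prop
  set F : ℝ → ℝ × ℝ → ℝ := fun l p => u p * Pw τ0 σ l p with hFdef
  set F1 : ℝ → ℝ × ℝ → ℝ := fun l p => u p * s p * (c / σ) * e l p with hF1def
  set F2 : ℝ → ℝ × ℝ → ℝ :=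
    fun l p => u p * s p * (c / σ) * ((Z p - l) / σ ^ 2 * e l p) with hF2def
  -- pointwise derivatives
  have hdF : ∀ l p, HasDerivAt (fun l => F l p) (F1 l p) l := by
    intro l p
    have := (hasDerivAt_Pw τ0 hσ p l).const_mul (u p)
    refine this.congr_deriv ?_
    rw [hF1def, hsdef, hedef, hc, hZdef]
    by_cases h : 0 ≤ p.1 + τ0 * p.2 <;> simp [h] <;> ring
  have hdF1 : ∀ l p, HasDerivAt (fun l => F1 l p) (F2 l p) l := by
    intro l p
    have := (hasDerivAt_gaussfactor (Z p) hσ l).const_mul (u p * s p * (c / σ))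
    refine this.congr_deriv (by simp only [hF2def]; try ring)
  -- measurability
  have hu_aesm : AEStronglyMeasurable u μ := hu_int.aestronglyMeasurable
  have hF_aesm : ∀ l, AEStronglyMeasurable (F l) μ := by
    intro l
    refine hu_aesm.mul ?_
    have : Measurable fun p => Pw τ0 σ l p := by
      refine Measurable.ite (measurableSet_le measurable_const hZmeas) ?_ ?_
      · exact (hQcont.comp (by fun_prop : Continuous fun p : ℝ × ℝ =>
          (p.1 + τ0 * p.2 - l) / σ)).measurable
      · exact (hQcont.comp (by fun_prop : Continuous fun p : ℝ × ℝ =>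
          -(p.1 + τ0 * p.2 - l) / σ)).measurable
    exact this.aestronglyMeasurable
  have hF1_aesm : ∀ l, AEStronglyMeasurable (F1 l) μ := by
    intro l
    exact ((hu_aesm.mul hsmeas.aestronglyMeasurable).mul aestronglyMeasurable_const).mul
      (he_cont l).aestronglyMeasurable
  have hF2_aesm : ∀ l, AEStronglyMeasurable (F2 l) μ := by
    intro l
    refine ((hu_aesm.mul hsmeas.aestronglyMeasurable).mul aestronglyMeasurable_const).mul ?_
    exact ((hZcont.sub continuous_const).div_const _).aestronglyMeasurable.mul
      (he_cont l).aestronglyMeasurable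
  -- integrability of F l
  set T : ℝ := ∫ t, Real.exp (-t ^ 2 / 2) with hT
  have hF_int : ∀ l, Integrable (F l) μ := by
    intro l
    refine Integrable.mono' ((hu_int.norm.const_mul (c * T))) (hF_aesm l) ?_
    refine Filter.Eventually.of_forall fun p => ?_
    rw [hFdef]
    simp only [norm_mul, Real.norm_eq_abs]
    have hPwb : |Pw τ0 σ l p| ≤ c * T := by
      rw [Pw]
      by_cases h : 0 ≤ p.1 + τ0 * p.2 <;> simp only [h, if_true, if_false] <;>
        exact Qfun_abs_le _
    calc |u p| * |Pw τ0 σ l p| ≤ |u p| * (c * T) :=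
          mul_le_mul_of_nonneg_left hPwb (abs_nonneg _)
      _ = c * T * |u p| := by ring
  -- bound for F1 (uniform in l)
  have hF1_bound : ∀ l p, ‖F1 l p‖ ≤ c / σ * |u p| := by
    intro l p
    rw [hF1def]
    simp only [Real.norm_eq_abs, abs_mul, hs_abs p]
    have h1 : |c / σ| = c / σ := abs_of_pos (by positivity)
    have h2 : |e l p| ≤ 1 := by
      rw [abs_of_pos (he_pos l p)]; exact he_le_one l p
    calc |u p| * 1 * |c / σ| * |e l p| ≤ |u p| * 1 * |c / σ| * 1 := by
          refine mul_le_mul_of_nonneg_left h2 (by positivity)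
      _ = c / σ * |u p| := by rw [h1]; ring
  have hbound1_int : Integrable (fun p => c / σ * |u p|) μ := hu_int.norm.const_mul _
  -- first derivative: U' l = ∫ F1 l
  have hU' : ∀ l, HasDerivAt (fun l => Uloss τ0 D u l σ) (∫ p, F1 l p ∂μ) l := by
    intro l
    have h := hasDerivAt_integral_of_dominated_loc_of_deriv_le (μ := μ) (x₀ := l)
      (F := F) (F' := F1) (bound := fun p => c / σ * |u p|) (Metric.ball_mem_nhds l one_pos)
      (Filter.Eventually.of_forall hF_aesm) (hF_int l) (hF1_aesm l)
      (Filter.Eventually.of_forall fun p => fun x _ => hF1_bound x p) hbound1_int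
      (Filter.Eventually.of_forall fun p => fun x _ => hdF x p)
    exact h.2
  have hF1_int : ∀ l, Integrable (F1 l) μ := by
    intro l
    refine Integrable.mono' hbound1_int (hF1_aesm l)
      (Filter.Eventually.of_forall fun p => hF1_bound l p)
  -- bound for F2 near lam0
  set K : ℝ := c / σ * ((M + |lam0| + 1) / σ ^ 2) with hK
  have hK0 : 0 ≤ K := by positivity
  have hF2_bound : ∀ᵐ p ∂μ, ∀ l ∈ Metric.ball lam0 1, ‖F2 l p‖ ≤ K * |u p| := by
    refine Filter.eventually_of_mem (self_mem_ae_restrict hDmeas) fun p hp => ?_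
    intro l hl
    have hZb := hZbdd p hp
    have hlb : |l - lam0| < 1 := by
      have := Metric.mem_ball.mp hl
      rwa [Real.dist_eq] at this
    have hZl : |Z p - l| ≤ M + |lam0| + 1 := by
      have : |Z p - l| ≤ |Z p| + |lam0| + |l - lam0| := by
        have h := abs_sub (Z p) l
        have : Z p - l = (Z p) + (-(l - lam0)) + (-lam0) := by ring
        rw [this]
        refine (abs_add_le _ _).trans ?_
        have := (abs_add_le (Z p) (-(l - lam0)))
        simp only [abs_neg] at *
        linarith
      linarith
    rw [hF2def]
    simp only [Real.norm_eq_abs, abs_mul, hs_abs p]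
    have h1 : |c / σ| = c / σ := abs_of_pos (by positivity)
    have h2 : |e l p| ≤ 1 := by
      rw [abs_of_pos (he_pos l p)]; exact he_le_one l p
    have h3 : |(Z p - l) / σ ^ 2| ≤ (M + |lam0| + 1) / σ ^ 2 := by
      rw [abs_div, abs_of_pos (by positivity : (0:ℝ) < σ ^ 2)]
      exact div_le_div_of_nonneg_right hZl (by positivity)
    calc |u p| * 1 * |c / σ| * (|(Z p - l) / σ ^ 2| * |e l p|)
        ≤ |u p| * 1 * (c / σ) * ((M + |lam0| + 1) / σ ^ 2 * 1) := by
          rw [h1]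
          refine mul_le_mul_of_nonneg_left ?_ (by positivity)
          exact mul_le_mul h3 h2 (abs_nonneg _) (by positivity)
      _ = K * |u p| := by rw [hK]; ring
  -- second derivative at lam0
  have hsecond := hasDerivAt_integral_of_dominated_loc_of_deriv_le (μ := μ) (x₀ := lam0)
    (F := F1) (F' := F2) (bound := fun p => K * |u p|) (Metric.ball_mem_nhds lam0 one_pos)
    (Filter.Eventually.of_forall hF1_aesm) (hF1_int lam0) (hF2_aesm lam0)
    hF2_bound (hu_int.norm.const_mul K)
    (Filter.Eventually.of_forall fun p => fun x _ => hdF1 x p)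
  have hF2_int : Integrable (F2 lam0) μ := hsecond.1
  have hU'' : HasDerivAt (fun l => ∫ p, F1 l p ∂μ) (∫ p, F2 lam0 p ∂μ) lam0 := hsecond.2
  -- identify derivatives
  have hderiv_eq : deriv (fun l => Uloss τ0 D u l σ) = fun l => ∫ p, F1 l p ∂μ :=
    funext fun l => (hU' l).deriv
  have hgoal_eq : deriv (deriv (fun l => Uloss τ0 D u l σ)) lam0 = ∫ p, F2 lam0 p ∂μ := by
    rw [hderiv_eq]; exact hU''.deriv
  have hB0 : (∫ p, F1 lam0 p ∂μ) = 0 := by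
    rw [← (hU' lam0).deriv]; exact hcrit
  -- auxiliary integrands
  set f : ℝ × ℝ → ℝ := fun p => u p * |Z p| * e lam0 p with hfdef
  set h : ℝ × ℝ → ℝ := fun p => u p * s p * e lam0 p with hhdef
  have hf_aesm : AEStronglyMeasurable f μ :=
    (hu_aesm.mul (continuous_abs.comp hZcont).aestronglyMeasurable).mul
      (he_cont lam0).aestronglyMeasurable
  have hh_aesm : AEStronglyMeasurable h μ :=
    (hu_aesm.mul hsmeas.aestronglyMeasurable).mul (he_cont lam0).aestronglyMeasurable
  have hf_int : Integrable f μ := by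
    refine Integrable.mono' (hu_int.norm.const_mul M) hf_aesm ?_
    refine Filter.eventually_of_mem (self_mem_ae_restrict hDmeas) fun p hp => ?_
    rw [hfdef]
    simp only [Real.norm_eq_abs, abs_mul, abs_abs]
    have h2 : |e lam0 p| ≤ 1 := by
      rw [abs_of_pos (he_pos lam0 p)]; exact he_le_one lam0 p
    calc |u p| * |Z p| * |e lam0 p| ≤ |u p| * M * 1 := by
          refine mul_le_mul (mul_le_mul_of_nonneg_left (hZbdd p hp) (abs_nonneg _)) h2
            (abs_nonneg _) (by positivity)
      _ = M * |u p| := by ring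
  have hh_int : Integrable h μ := by
    refine Integrable.mono' hu_int.norm hh_aesm ?_
    refine Filter.Eventually.of_forall fun p => ?_
    rw [hhdef]
    simp only [Real.norm_eq_abs, abs_mul, hs_abs p]
    have h2 : |e lam0 p| ≤ 1 := by
      rw [abs_of_pos (he_pos lam0 p)]; exact he_le_one lam0 p
    calc |u p| * 1 * |e lam0 p| ≤ |u p| * 1 * 1 :=
          mul_le_mul_of_nonneg_left h2 (by positivity)
      _ = |u p| := by ring
  -- B = 0 from the critical point
  have hF1_eq : F1 lam0 = fun p => c / σ * h p := by
    funext p; rw [hF1def, hhdef]; ring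
  have hB : (∫ p, h p ∂μ) = 0 := by
    have := hB0
    rw [hF1_eq, integral_const_mul] at this
    have hcσ : c / σ ≠ 0 := by positivity
    exact (mul_eq_zero.mp this).resolve_left hcσ
  -- split the second derivative integral
  have hF2_eq : F2 lam0 = fun p => c / σ ^ 3 * f p - c / σ ^ 3 * lam0 * h p := by
    funext p
    rw [hF2def, hfdef, hhdef, hsdef, hZdef]
    by_cases hz : 0 ≤ p.1 + τ0 * p.2
    · simp only [hz, if_true, abs_of_nonneg hz]; ring
    · simp only [hz, if_false, abs_of_neg (lt_of_not_ge hz)]; ring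
  have hsplit : (∫ p, F2 lam0 p ∂μ) = c / σ ^ 3 * ∫ p, f p ∂μ := by
    rw [hF2_eq]
    rw [integral_sub ((hf_int.const_mul _)) ((hh_int.const_mul _)),
      integral_const_mul, integral_const_mul, hB]
    ring
  -- the null line
  set L : (ℝ × ℝ) →ₗ[ℝ] ℝ := LinearMap.fst ℝ ℝ ℝ + τ0 • LinearMap.snd ℝ ℝ ℝ with hL
  have hker_ne : LinearMap.ker L ≠ ⊤ := by
    intro htop
    have h1 : ((1:ℝ), (0:ℝ)) ∈ LinearMap.ker L := by rw [htop]; trivial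
    have : L ((1:ℝ), (0:ℝ)) = 1 := by simp [hL]
    rw [LinearMap.mem_ker, this] at h1
    exact one_ne_zero h1
  have hNnull : volume {p : ℝ × ℝ | Z p = 0} = 0 := by
    have hset : {p : ℝ × ℝ | Z p = 0} = (LinearMap.ker L : Set (ℝ × ℝ)) := by
      ext p
      simp [hL, hZdef, LinearMap.mem_ker]
    rw [hset]
    exact Measure.addHaar_submodule volume _ hker_ne
  have hDN : 0 < volume (D \ {p : ℝ × ℝ | Z p = 0}) := by
    rwa [measure_diff_null hNnull]
  -- positivity of A
  have hA_pos : 0 < ∫ p, f p ∂μ := by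
    have hnn : 0 ≤ᵐ[μ] f := by
      refine Filter.eventually_of_mem (self_mem_ae_restrict hDmeas) fun p hp => ?_
      rw [hfdef]
      have := hu_pos p hp
      positivity
    rw [hμ] at *
    refine (setIntegral_pos_iff_support_of_nonneg_ae hnn hf_int).mpr ?_
    refine lt_of_lt_of_le hDN (measure_mono ?_)
    rintro p ⟨hpD, hpN⟩
    refine ⟨?_, hpD⟩
    have hu := hu_pos p hpD
    have hz : Z p ≠ 0 := hpN
    have : 0 < f p := by
      rw [hfdef]
      have : 0 < |Z p| := abs_pos.mpr hz
      positivity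
    exact ne_of_gt this
  rw [hgoal_eq, hsplit]
  positivity
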